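/- Let D be a 4×4 complex matrix (entries D_{ij}, 0-based indexing, row i and column j). The linear map x ↦ D·x on ℂ⁴ is a derivation of the 4-dimensional Mock-Lie algebra A_{1,4} if and only if D_{01} = D_{02} = D_{03} = 0, D_{13} = 0, D_{21} = 0, D_{23} = 0, D_{00} = D_{33} − D_{22}, D_{11} = 2·(D_{33} − D_{22}), and D_{31} = 2·D_{20}. Equivalently, the derivations are exactly the linear maps whose matrix relative to the basis (e_1, e_2, e_3, e_4) has the form [[d_{44}−d_{33}, 0, 0, 0], [d_{21}, 2d_{44}−2d_{33}, d_{23}, 0], [d_{31}, 0, d_{33}, 0], [d_{41}, 2d_{31}, d_{43}, d_{44}]]. -/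
import Mathlib


/-- The product of the 4-dimensional Mock-Lie algebra `A_{1,4}`:
`e_1 · e_1 = e_2`, `e_1 · e_3 = e_4`, all other products of basis vectors zero. -/
def mulA14 (x y : Fin 4 → ℂ) : Fin 4 → ℂ := ![0, x 0 * y 0, 0, x 0 * y 2 + x 2 * y 0]

/-- `x ↦ D · x` is a derivation of `A_{1,4}` iff
`D 0 1 = D 0 2 = D 0 3 = 0`, `D 1 3 = 0`, `D 2 1 = 0`, `D 2 3 = 0`,
`D 0 0 = D 3 3 - D 2 2`, `D 1 1 = 2 * (D 3 3 - D 2 2)` and `D 3 1 = 2 * D 2 0`. -/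
theorem derivation_A14_iff (D : Matrix (Fin 4) (Fin 4) ℂ) :
    (∀ x y : Fin 4 → ℂ,
        D.mulVec (mulA14 x y) = mulA14 (D.mulVec x) y + mulA14 x (D.mulVec y)) ↔
      (D 0 1 = 0 ∧ D 0 2 = 0 ∧ D 0 3 = 0 ∧ D 1 3 = 0 ∧ D 2 1 = 0 ∧ D 2 3 = 0 ∧
        D 0 0 = D 3 3 - D 2 2 ∧ D 1 1 = 2 * (D 3 3 - D 2 2) ∧ D 3 1 = 2 * D 2 0) := by
  constructor
  · intro h
    have h00 := h ![1,0,0,0] ![1,0,0,0]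
    have h02 := h ![1,0,0,0] ![0,0,1,0]
    have h22 := h ![0,0,1,0] ![0,0,1,0]
    have e000 := congrFun h00 0
    have e001 := congrFun h00 1
    have e002 := congrFun h00 2
    have e003 := congrFun h00 3
    have e020 := congrFun h02 0
    have e021 := congrFun h02 1
    have e022 := congrFun h02 2
    have e023 := congrFun h02 3
    have e223 := congrFun h22 3
    simp [mulA14, Matrix.mulVec, dotProduct, Fin.sum_univ_four] at e000 e001 e002 e003 e020 e021 e022 e023 e223
    refine ⟨e000, ?_, e020, ?_, e002, e022, ?_, ?_, ?_⟩
    · linear_combination (-1/2 : ℂ) * e223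
    · linear_combination e021 - (1/2 : ℂ) * e223
    · linear_combination (-1 : ℂ) * e023
    · linear_combination e001 - 2 * e023
    · linear_combination e003
  · rintro ⟨h1, h2, h3, h4, h5, h6, h7, h8, h9⟩
    intro x y
    funext i
    fin_cases i <;>
      simp [mulA14, Matrix.mulVec, dotProduct, Fin.sum_univ_four, h1, h2, h3,
        h4, h5, h6, h7, h8, h9] <;> ring
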